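/- Let G be a topological group acting continuously on a compact Hausdorff space X, and let x ∈ X be almost periodic: for every open neighborhood U of x, the set A_U = {g ∈ G : g·x ∈ U} satisfies G = K·A_U for some compact K ⊆ G. Then the orbit closure cl(Gx) is minimal. -/

import Mathlib

theorem stmt6 {G X : Type*} [Group G] [TopologicalSpace G] [IsTopologicalGroup G]
    [TopologicalSpace X] [CompactSpace X] [T2Space X]
    [MulAction G X] [ContinuousSMul G X]
    (x : X)
    (hap : ∀ U : Set X, IsOpen U → x ∈ U →
      ∃ K : Set G, IsCompact K ∧ ∀ g : G, ∃ k ∈ K, ∃ a : G, a • x ∈ U ∧ g = k * a) :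
    ∀ N ⊆ closure (Set.range fun g : G => g • x), N.Nonempty → IsClosed N →
      (∀ g : G, ∀ y ∈ N, g • y ∈ N) →
      N = closure (Set.range fun g : G => g • x) := by
  intro N hN hNne hNcl hNinv
  obtain ⟨y, hy⟩ := hNne
  have hx : x ∈ N := by
    set C := closure (Set.range fun g : G => g • y) with hC
    have hCsub : C ⊆ N := by
      apply closure_minimal _ hNcl
      rintro _ ⟨g, rfl⟩
      exact hNinv g y hy
    by_contra hxN
    have hxC : x ∉ C := fun h => hxN (hCsub h)
    have hCc : Cᶜ ∈ nhds x := isClosed_closure.isOpen_compl.mem_nhds hxC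
    obtain ⟨t, ht, htc, hts⟩ := exists_mem_nhds_isClosed_subset hCc
    obtain ⟨U, hUt, hUo, hxU⟩ := mem_nhds_iff.mp ht
    obtain ⟨K, hK, hKprop⟩ := hap U hUo hxU
    set S := (fun p : G × X => p.1 • p.2) '' (K ×ˢ closure U) with hS
    have hScomp : IsCompact S :=
      (hK.prod isClosed_closure.isCompact).image continuous_smul
    have horb : Set.range (fun g : G => g • x) ⊆ S := by
      rintro _ ⟨g, rfl⟩
      obtain ⟨k, hk, a, haU, rfl⟩ := hKprop g
      exact ⟨(k, a • x), ⟨hk, subset_closure haU⟩, (mul_smul k a x).symm⟩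
    have hyS : y ∈ S :=
      closure_minimal horb hScomp.isClosed (hN hy)
    obtain ⟨⟨k, u⟩, ⟨hk, hu⟩, hky⟩ := hyS
    have h1 : k⁻¹ • y ∈ closure U := by
      have : k⁻¹ • y = u := by
        rw [← hky]; simp [smul_smul]
      rwa [this]
    have h2 : k⁻¹ • y ∈ C := subset_closure ⟨k⁻¹, rfl⟩
    have h3 : closure U ⊆ t := closure_minimal hUt htc
    exact hts (h3 h1) h2
  refine Set.Subset.antisymm hN (closure_minimal ?_ hNcl)
  rintro _ ⟨g, rfl⟩
  exact hNinv g x hx
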